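/- arXiv:1707.01255 — 5 statements merged into one kernel-verified Lean document; each statement's English description precedes it below -/
import Mathlib

section
/- For any multi-indices i, j : Fin 3 → ℕ with |i| = |j| = N, the Gram matrix entry of the triangular Bernstein basis satisfies ∫_Ω B_i^N(s,t) B_j^N(s,t) ds dt = (C(N,i) · C(N,j) / C(2N, i+j)) · 1/((2N+1)(2N+2)), where C(N,i) = N!/((i 0)! (i 1)! (i 2)!). -/
open MeasureTheory Finset

/-- The multinomial coefficient `n! / ∏ l, (i l)!` as a real number. -/
noncomputable def mcoef {L : ℕ} (n : ℕ) (i : Fin L → ℕ) : ℝ :=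
  (n.factorial : ℝ) / ∏ l, ((i l).factorial : ℝ)

/-- The Bernstein basis polynomial of degree `n` for the multi-index `i`,
as a function of barycentric coordinates `β : Fin L → ℝ`. -/
noncomputable def bern {L : ℕ} (n : ℕ) (i : Fin L → ℕ) (β : Fin L → ℝ) : ℝ :=
  mcoef n i * ∏ l, β l ^ i l

/-- The triangular Bernstein basis polynomial of degree `n` for a multi-index
`i : Fin 3 → ℕ`, as a function on `ℝ²`. -/
noncomputable def triBern (n : ℕ) (i : Fin 3 → ℕ) (x : ℝ × ℝ) : ℝ :=
  mcoef n i * (x.1 ^ i 0 * x.2 ^ i 1 * (1 - x.1 - x.2) ^ i 2)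

/-- The tetrahedral Bernstein basis polynomial of degree `m` for a multi-index
`j : Fin 4 → ℕ`, as a function on `ℝ⁴`. -/
noncomputable def tetBern (m : ℕ) (j : Fin 4 → ℕ) (u : Fin 4 → ℝ) : ℝ :=
  mcoef m j * ∏ l, u l ^ j l

/-- The standard triangle `Ω = {(s,t) : 0 ≤ s, 0 ≤ t, s + t ≤ 1}` in `ℝ²`. -/
def Omega : Set (ℝ × ℝ) := {x | 0 ≤ x.1 ∧ 0 ≤ x.2 ∧ x.1 + x.2 ≤ 1}

/-- `p : ℝ² → ℝ⁴` has components that are real polynomials in `(s,t)` of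
total degree at most `n`. -/
def PolyComponents (n : ℕ) (p : ℝ × ℝ → Fin 4 → ℝ) : Prop :=
  ∀ l : Fin 4, ∃ P : MvPolynomial (Fin 2) ℝ, P.totalDegree ≤ n ∧
    ∀ x : ℝ × ℝ, p x l = MvPolynomial.eval ![x.1, x.2] P



open intervalIntegral in
lemma beta_nat (b : ℕ) : ∀ a : ℕ, ∫ x in (0:ℝ)..1, x ^ a * (1 - x) ^ b =
    (a.factorial * b.factorial : ℝ) / (a + b + 1).factorial := by
  induction b with
  | zero =>
    intro a
    simp [integral_pow]
    rw [Nat.factorial_succ]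
    push_cast
    field_simp
  | succ b ih =>
    intro a
    have h1 : ∀ x : ℝ, x ^ a * (1 - x) ^ (b + 1) = x ^ a * (1 - x) ^ b - x ^ (a+1) * (1 - x) ^ b := by
      intro x; ring
    have c1 : Continuous fun x : ℝ => x ^ a * (1 - x) ^ b := by fun_prop
    have c2 : Continuous fun x : ℝ => x ^ (a+1) * (1 - x) ^ b := by fun_prop
    simp_rw [h1]
    rw [intervalIntegral.integral_sub (c1.intervalIntegrable 0 1) (c2.intervalIntegrable 0 1),
      ih a, ih (a+1)]
    have e1 : a + 1 + b + 1 = a + b + 2 := by ring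
    have e2 : a + (b+1) + 1 = a + b + 2 := by ring
    rw [e1, e2]
    have f1 : ((a+b+2).factorial : ℝ) = (a+b+2) * (a+b+1).factorial := by
      rw [show a+b+2 = (a+b+1)+1 from rfl, Nat.factorial_succ]; push_cast; ring
    have f2 : ((a+1).factorial : ℝ) = (a+1) * a.factorial := by
      rw [Nat.factorial_succ]; push_cast; ring
    have f3 : ((b+1).factorial : ℝ) = (b+1) * b.factorial := by
      rw [Nat.factorial_succ]; push_cast; ring
    rw [f1, f2, f3]
    have h1 : (( a+b+1).factorial : ℝ) ≠ 0 := Nat.cast_ne_zero.mpr (Nat.factorial_ne_zero _)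
    have h2 : ((a:ℝ)+b+2) ≠ 0 := by positivity
    field_simp
    ring

open intervalIntegral in
lemma beta_scaled (u : ℝ) (b c : ℕ) : ∫ t in (0:ℝ)..u, t ^ b * (u - t) ^ c =
    u ^ (b + c + 1) * ∫ x in (0:ℝ)..1, x ^ b * (1 - x) ^ c := by
  have h := intervalIntegral.smul_integral_comp_mul_left (fun t => t ^ b * (u - t) ^ c) u (a := 0) (b := 1)
  simp only [mul_zero, mul_one, smul_eq_mul] at h
  have key : ∀ x : ℝ, u * ((u*x)^b * (u-u*x)^c) = u^(b+c+1) * (x^b * (1-x)^c) := by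
    intro x; rw [show u - u*x = u*(1-x) by ring, mul_pow, mul_pow]; ring
  calc ∫ t in (0:ℝ)..u, t ^ b * (u - t) ^ c
      = u * ∫ x in (0:ℝ)..1, (u*x)^b * (u-u*x)^c := h.symm
    _ = ∫ x in (0:ℝ)..1, u * ((u*x)^b * (u-u*x)^c) := (intervalIntegral.integral_const_mul _ _).symm
    _ = ∫ x in (0:ℝ)..1, u^(b+c+1) * (x^b * (1-x)^c) := by simp_rw [key]
    _ = u^(b+c+1) * ∫ x in (0:ℝ)..1, x^b * (1-x)^c := intervalIntegral.integral_const_mul _ _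

lemma Omega_isCompact : IsCompact Omega := by
  have hclosed : IsClosed Omega := by
    apply IsClosed.inter (isClosed_le continuous_const continuous_fst)
    exact IsClosed.inter (isClosed_le continuous_const continuous_snd)
      (isClosed_le (continuous_fst.add continuous_snd) continuous_const)
  have hsub : Omega ⊆ Set.Icc ((0:ℝ), (0:ℝ)) (1, 1) := by
    rintro ⟨s, t⟩ ⟨h1, h2, h3⟩
    constructor <;> constructor <;> simp_all <;> linarith
  exact isCompact_Icc.of_isClosed_subset hclosed hsub

lemma Omega_measurableSet : MeasurableSet Omega :=
  Omega_isCompact.isClosed.measurableSet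

lemma triangle_int (a b c : ℕ) :
    ∫ x in Omega, x.1 ^ a * x.2 ^ b * (1 - x.1 - x.2) ^ c =
      (a.factorial * b.factorial * c.factorial : ℝ) / (a + b + c + 2).factorial := by
  set F : ℝ × ℝ → ℝ := fun x => x.1 ^ a * x.2 ^ b * (1 - x.1 - x.2) ^ c with hF
  have hFc : Continuous F := by fun_prop
  have hInt : IntegrableOn F Omega := hFc.continuousOn.integrableOn_compact Omega_isCompact
  have hIndInt : Integrable (Omega.indicator F) := hInt.integrable_indicator Omega_measurableSet
  rw [← integral_indicator Omega_measurableSet]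
  rw [Measure.volume_eq_prod] at hIndInt ⊢
  rw [MeasureTheory.integral_prod _ hIndInt]
  -- inner integral
  have inner_eq : ∀ s : ℝ, (∫ t, Omega.indicator F (s, t)) =
      Set.indicator (Set.Icc (0:ℝ) 1)
        (fun s => ∫ t in Set.Icc (0:ℝ) (1 - s), F (s, t)) s := by
    intro s
    classical
    by_cases hs : s ∈ Set.Icc (0:ℝ) 1
    · rw [Set.indicator_of_mem hs, ← integral_indicator measurableSet_Icc]
      congr 1; funext t
      rw [Set.indicator_apply, Set.indicator_apply]
      apply if_congr _ rfl rfl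
      simp only [Omega, Set.mem_setOf_eq, Set.mem_Icc]
      constructor
      · rintro ⟨_, h2, h3⟩; exact ⟨h2, by linarith⟩
      · rintro ⟨h2, h3⟩; exact ⟨hs.1, h2, by linarith⟩
    · rw [Set.indicator_of_notMem hs]
      have : ∀ t : ℝ, Omega.indicator F (s, t) = 0 := by
        intro t
        apply Set.indicator_of_notMem
        rintro ⟨h1, h2, h3⟩
        simp only [Set.mem_Icc, not_and, not_le] at hs
        have := hs h1
        simp at h1 h2 h3
        linarith
      simp_rw [this, integral_zero]
  simp_rw [inner_eq]
  rw [integral_indicator measurableSet_Icc]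
  -- now compute: for s in Icc 0 1, inner = s^a * (1-s)^(b+c+1) * K
  set K : ℝ := (b.factorial * c.factorial : ℝ) / (b + c + 1).factorial with hK
  have step : ∀ s ∈ Set.Icc (0:ℝ) 1,
      (∫ t in Set.Icc (0:ℝ) (1 - s), F (s, t)) = s ^ a * (1 - s) ^ (b + c + 1) * K := by
    intro s hs
    have h01 : (0:ℝ) ≤ 1 - s := by simp at hs; linarith [hs.2]
    rw [integral_Icc_eq_integral_Ioc, ← intervalIntegral.integral_of_le h01]
    have : ∀ t : ℝ, F (s, t) = s ^ a * (t ^ b * ((1 - s) - t) ^ c) := by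
      intro t; simp only [hF]; ring
    simp_rw [this]
    rw [intervalIntegral.integral_const_mul, beta_scaled, beta_nat]
    ring
  rw [setIntegral_congr_fun measurableSet_Icc step]
  have : ∫ s in Set.Icc (0:ℝ) 1, s ^ a * (1 - s) ^ (b + c + 1) * K =
      (∫ s in (0:ℝ)..1, s ^ a * (1 - s) ^ (b + c + 1)) * K := by
    rw [intervalIntegral.integral_of_le (by norm_num : (0:ℝ) ≤ 1),
      ← integral_Icc_eq_integral_Ioc, ← integral_mul_const]
  rw [this, beta_nat]
  have e : a + (b + c + 1) + 1 = a + b + c + 2 := by ring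
  rw [e, hK]
  have h1 : ((b+c+1).factorial : ℝ) ≠ 0 := Nat.cast_ne_zero.mpr (Nat.factorial_ne_zero _)
  have h2 : ((a+b+c+2).factorial : ℝ) ≠ 0 := Nat.cast_ne_zero.mpr (Nat.factorial_ne_zero _)
  field_simp

/-- Gram matrix entries of the triangular Bernstein basis. -/
theorem triBern_gram (N : ℕ) (i j : Fin 3 → ℕ)
    (hi : i 0 + i 1 + i 2 = N) (hj : j 0 + j 1 + j 2 = N) :
    ∫ x in Omega, triBern N i x * triBern N j x =
      (mcoef N i * mcoef N j / mcoef (2 * N) (i + j)) *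
        (1 / ((2 * (N : ℝ) + 1) * (2 * (N : ℝ) + 2))) := by
  have key : ∀ x : ℝ × ℝ, triBern N i x * triBern N j x =
      (mcoef N i * mcoef N j) *
        (x.1 ^ (i 0 + j 0) * x.2 ^ (i 1 + j 1) * (1 - x.1 - x.2) ^ (i 2 + j 2)) := by
    intro x; simp only [triBern]; rw [pow_add, pow_add, pow_add]; ring
  simp_rw [key]
  rw [MeasureTheory.integral_const_mul, triangle_int]
  rw [show i 0 + j 0 + (i 1 + j 1) + (i 2 + j 2) + 2 = 2*N+2 by omega]
  have f : ((2*N+2).factorial : ℝ) = (2*(N:ℝ)+2)*(2*(N:ℝ)+1)*(2*N).factorial := by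
    rw [show 2*N+2 = (2*N+1)+1 from rfl, Nat.factorial_succ, Nat.factorial_succ]
    push_cast; ring
  rw [f]
  simp only [mcoef, Fin.prod_univ_three, Pi.add_apply]
  have n1 : ((2*N).factorial : ℝ) ≠ 0 := Nat.cast_ne_zero.mpr (Nat.factorial_ne_zero _)
  have n2 : (2*(N:ℝ)+1) ≠ 0 := by positivity
  have n3 : (2*(N:ℝ)+2) ≠ 0 := by positivity
  have n4 : ∀ m : ℕ, (m.factorial : ℝ) ≠ 0 := fun m => Nat.cast_ne_zero.mpr (Nat.factorial_ne_zero _)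
  field_simp
end

section
/- Let p : ℝ² → ℝ⁴ have polynomial components of total degree at most n, and let D = (d_{j,k}) satisfy B_j^m(p(s,t)) = Σ_{|k|=mn} d_{j,k} B_k^{mn}(s,t) for all (s,t) ∈ ℝ² and all |j| = m. Then for every coefficient vector b : {j : Fin 4 → ℕ // |j| = m} → ℝ, the polynomial q_b(u) = Σ_{|j|=m} b_j B_j^m(u) satisfies sup_{(s,t)∈Ω} |q_b(p(s,t))| ≤ ‖D b‖, where ‖D b‖ is the Euclidean norm of the vector with entries (Db)_k = Σ_{|j|=m} d_{j,k} b_j. -/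
open MeasureTheory Finset

/-- the pointwise algebraic error of `q_b` on `Ω` is bounded by
the Euclidean norm `‖D b‖`. -/
theorem original_error_bound (n m : ℕ) (p : ℝ × ℝ → Fin 4 → ℝ)
    (hp : PolyComponents n p) (d : (Fin 4 → ℕ) → (Fin 3 → ℕ) → ℝ)
    (hD : ∀ j ∈ Finset.Nat.antidiagonalTuple 4 m, ∀ x : ℝ × ℝ,
      tetBern m j (p x) =
        ∑ k ∈ Finset.Nat.antidiagonalTuple 3 (m * n), d j k * triBern (m * n) k x)
    (b : (Fin 4 → ℕ) → ℝ) (x : ℝ × ℝ) (hx : x ∈ Omega) :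
    |∑ j ∈ Finset.Nat.antidiagonalTuple 4 m, b j * tetBern m j (p x)| ≤
      Real.sqrt (∑ k ∈ Finset.Nat.antidiagonalTuple 3 (m * n),
        (∑ j ∈ Finset.Nat.antidiagonalTuple 4 m, d j k * b j) ^ 2) := by
  set T := Finset.Nat.antidiagonalTuple 3 (m * n) with hT
  -- nonnegativity of triBern on Omega
  have hB0 : ∀ k ∈ T, 0 ≤ triBern (m * n) k x := by
    intro k hk
    obtain ⟨hx1, hx2, hx3⟩ := hx
    have h3 : (0:ℝ) ≤ 1 - x.1 - x.2 := by linarith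
    have hm : 0 ≤ mcoef (m * n) k := by
      unfold mcoef
      positivity
    unfold triBern
    positivity
  -- sum of triBern equals 1
  have hBsum : ∑ k ∈ T, triBern (m * n) k x = 1 := by
    have key := Finset.sum_pow_eq_sum_piAntidiag (Finset.univ : Finset (Fin 3))
      (![x.1, x.2, 1 - x.1 - x.2]) (m * n)
    rw [Finset.piAntidiag_univ_fin_eq_antidiagonalTuple] at key
    have hl : ∑ i, (![x.1, x.2, 1 - x.1 - x.2]) i = 1 := by
      simp [Fin.sum_univ_three]
    rw [hl, one_pow] at key
    rw [key]
    refine Finset.sum_congr rfl fun k hk => ?_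
    have hks : ∑ l, k l = m * n := by
      simpa using (Finset.Nat.mem_antidiagonalTuple.mp hk)
    have hmc : mcoef (m * n) k = (Nat.multinomial Finset.univ k : ℝ) := by
      have hspec := Nat.multinomial_spec (Finset.univ : Finset (Fin 3)) k
      rw [hks] at hspec
      have hprod : (0:ℝ) < ∏ l, ((k l).factorial : ℝ) := by positivity
      unfold mcoef
      rw [div_eq_iff (ne_of_gt hprod)]
      rw [← Nat.cast_prod, ← Nat.cast_mul, mul_comm (Nat.multinomial _ _), hspec]
    unfold triBern
    rw [hmc]
    congr 1
    simp [Fin.prod_univ_three]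
  -- rewrite LHS
  have h1 : ∑ j ∈ Finset.Nat.antidiagonalTuple 4 m, b j * tetBern m j (p x)
      = ∑ k ∈ T, (∑ j ∈ Finset.Nat.antidiagonalTuple 4 m, d j k * b j)
          * triBern (m * n) k x := by
    rw [Finset.sum_congr rfl fun j hj => by rw [hD j hj x]]
    simp_rw [Finset.mul_sum]
    rw [Finset.sum_comm]
    refine Finset.sum_congr rfl fun k hk => ?_
    rw [Finset.sum_mul]
    refine Finset.sum_congr rfl fun j hj => ?_
    ring
  rw [h1]
  -- Cauchy-Schwarz
  set c : (Fin 3 → ℕ) → ℝ := fun k => ∑ j ∈ Finset.Nat.antidiagonalTuple 4 m, d j k * b j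
  have hcs := Finset.sum_mul_sq_le_sq_mul_sq T c (fun k => triBern (m * n) k x)
  have hB2 : ∑ k ∈ T, triBern (m * n) k x ^ 2 ≤ 1 := by
    calc ∑ k ∈ T, triBern (m * n) k x ^ 2
        ≤ (∑ k ∈ T, triBern (m * n) k x) ^ 2 :=
          Finset.sum_sq_le_sq_sum_of_nonneg hB0
      _ = 1 := by rw [hBsum]; norm_num
  have hc2 : (0:ℝ) ≤ ∑ k ∈ T, c k ^ 2 := Finset.sum_nonneg fun _ _ => sq_nonneg _
  have h2 : (∑ k ∈ T, c k * triBern (m * n) k x) ^ 2 ≤ ∑ k ∈ T, c k ^ 2 := by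
    calc (∑ k ∈ T, c k * triBern (m * n) k x) ^ 2
        ≤ (∑ k ∈ T, c k ^ 2) * ∑ k ∈ T, triBern (m * n) k x ^ 2 := hcs
      _ ≤ (∑ k ∈ T, c k ^ 2) * 1 := by exact mul_le_mul_of_nonneg_left hB2 hc2
      _ = ∑ k ∈ T, c k ^ 2 := mul_one _
  calc |∑ k ∈ T, c k * triBern (m * n) k x|
      = Real.sqrt ((∑ k ∈ T, c k * triBern (m * n) k x) ^ 2) :=
        (Real.sqrt_sq_eq_abs _).symm
    _ ≤ Real.sqrt (∑ k ∈ T, c k ^ 2) := Real.sqrt_le_sqrt h2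
end

section
/- Let p : ℝ² → ℝ⁴ have polynomial components of total degree at most n, and let D = (d_{j,k}) satisfy B_j^m(p(s,t)) = Σ_{|k|=mn} d_{j,k} B_k^{mn}(s,t) for all (s,t) ∈ ℝ² and all |j| = m. Then there exists a coefficient vector b with Euclidean norm ‖b‖ = 1 such that for every b' with ‖b'‖ = 1, sup_{(s,t)∈Ω} |q_b(p(s,t))| ≤ ‖D b'‖, where q_b(u) = Σ_{|j|=m} b_j B_j^m(u). In other words, the vector corresponding to the smallest singular value of D yields an approximate implicitization whose maximal algebraic error on Ω is at most σ_min(D). -/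
set_option maxHeartbeats 1000000

open MeasureTheory Finset

lemma mcoef_eq {L N : ℕ} (k : Fin L → ℕ) (h : ∑ l, k l = N) :
    mcoef N k = (Nat.multinomial Finset.univ k : ℝ) := by
  have hs := Nat.multinomial_spec Finset.univ k
  rw [h] at hs
  have h0 : (∏ l, ((k l).factorial : ℝ)) ≠ 0 := by positivity
  rw [mcoef, div_eq_iff h0, ← hs]
  push_cast
  ring

lemma mcoef_nonneg {L : ℕ} (n : ℕ) (i : Fin L → ℕ) : 0 ≤ mcoef n i := by
  unfold mcoef; positivity

/-- Partition of unity for the triangular Bernstein basis. -/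
lemma triBern_sum (N : ℕ) (x : ℝ × ℝ) :
    ∑ k ∈ Finset.Nat.antidiagonalTuple 3 N, triBern N k x = 1 := by
  have key := Finset.sum_pow_eq_sum_piAntidiag (Finset.univ : Finset (Fin 3))
      ![x.1, x.2, 1 - x.1 - x.2] N
  rw [Finset.piAntidiag_univ_fin_eq_antidiagonalTuple N 3] at key
  have hsum : ∑ i, ![x.1, x.2, 1 - x.1 - x.2] i = 1 := by
    rw [Fin.sum_univ_three]; show x.1 + x.2 + (1 - x.1 - x.2) = 1; ring
  rw [hsum, one_pow] at key
  rw [key]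
  refine Finset.sum_congr rfl fun k hk => ?_
  rw [Finset.Nat.mem_antidiagonalTuple] at hk
  rw [triBern, mcoef_eq k hk, Fin.prod_univ_three]
  simp

lemma triBern_nonneg (N : ℕ) (k : Fin 3 → ℕ) {x : ℝ × ℝ} (hx : x ∈ Omega) :
    0 ≤ triBern N k x := by
  obtain ⟨h1, h2, h3⟩ := hx
  have h4 : (0:ℝ) ≤ 1 - x.1 - x.2 := by linarith
  have := mcoef_nonneg N k
  unfold triBern
  positivity

/-- Key estimate: a Bernstein-form polynomial on Ω is bounded by the Euclidean
norm of its coefficient vector. -/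
lemma bern_bound (N : ℕ) (c : (Fin 3 → ℕ) → ℝ) {x : ℝ × ℝ} (hx : x ∈ Omega) :
    |∑ k ∈ Finset.Nat.antidiagonalTuple 3 N, c k * triBern N k x| ≤
      Real.sqrt (∑ k ∈ Finset.Nat.antidiagonalTuple 3 N, (c k) ^ 2) := by
  set K := Finset.Nat.antidiagonalTuple 3 N
  set M := Real.sqrt (∑ k ∈ K, (c k) ^ 2) with hM
  have hck : ∀ k ∈ K, |c k| ≤ M := by
    intro k hk
    have h1 : (c k) ^ 2 ≤ ∑ k ∈ K, (c k) ^ 2 :=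
      Finset.single_le_sum (fun i _ => sq_nonneg (c i)) hk
    calc |c k| = Real.sqrt ((c k) ^ 2) := (Real.sqrt_sq_eq_abs _).symm
      _ ≤ M := Real.sqrt_le_sqrt h1
  calc |∑ k ∈ K, c k * triBern N k x|
      ≤ ∑ k ∈ K, |c k * triBern N k x| := Finset.abs_sum_le_sum_abs _ _
    _ ≤ ∑ k ∈ K, M * triBern N k x := by
        refine Finset.sum_le_sum fun k hk => ?_
        rw [abs_mul, abs_of_nonneg (triBern_nonneg N k hx)]
        exact mul_le_mul_of_nonneg_right (hck k hk) (triBern_nonneg N k hx)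
    _ = M * ∑ k ∈ K, triBern N k x := by rw [Finset.mul_sum]
    _ = M := by rw [triBern_sum]; ring

/-- there is a unit coefficient vector `b` (the one corresponding
to the smallest singular value of `D`) whose maximal algebraic error on `Ω` is
at most `‖D b'‖` for every unit vector `b'`, i.e. at most `σ_min(D)`. -/
theorem exists_best_candidate (n m : ℕ) (p : ℝ × ℝ → Fin 4 → ℝ)
    (hp : PolyComponents n p) (d : (Fin 4 → ℕ) → (Fin 3 → ℕ) → ℝ)
    (hD : ∀ j ∈ Finset.Nat.antidiagonalTuple 4 m, ∀ x : ℝ × ℝ,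
      tetBern m j (p x) =
        ∑ k ∈ Finset.Nat.antidiagonalTuple 3 (m * n), d j k * triBern (m * n) k x) :
    ∃ b : (Fin 4 → ℕ) → ℝ,
      Real.sqrt (∑ j ∈ Finset.Nat.antidiagonalTuple 4 m, (b j) ^ 2) = 1 ∧
      ∀ b' : (Fin 4 → ℕ) → ℝ,
        Real.sqrt (∑ j ∈ Finset.Nat.antidiagonalTuple 4 m, (b' j) ^ 2) = 1 →
        ∀ x ∈ Omega,
          |∑ j ∈ Finset.Nat.antidiagonalTuple 4 m, b j * tetBern m j (p x)| ≤
            Real.sqrt (∑ k ∈ Finset.Nat.antidiagonalTuple 3 (m * n),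
              (∑ j ∈ Finset.Nat.antidiagonalTuple 4 m, d j k * b' j) ^ 2) := by
  classical
  set A := Finset.Nat.antidiagonalTuple 4 m with hA
  set K := Finset.Nat.antidiagonalTuple 3 (m * n) with hK
  -- the index type
  set ι := {j // j ∈ A}
  -- an element of A
  have hj0 : (fun l : Fin 4 => if l = 0 then m else 0) ∈ A := by
    rw [hA, Finset.Nat.mem_antidiagonalTuple]
    simp [Fin.sum_univ_four]
  -- the objective function
  set F : (ι → ℝ) → ℝ := fun v =>
    Real.sqrt (∑ k ∈ K, (∑ j : ι, d j.1 k * v j) ^ 2) with hF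
  have hFcont : Continuous F := by
    apply Real.continuous_sqrt.comp
    apply continuous_finset_sum
    intro k _
    exact ((continuous_finset_sum _ fun j _ =>
      continuous_const.mul (continuous_apply j)).pow 2)
  -- the sphere
  set S : Set (ι → ℝ) := {v | ∑ j : ι, (v j) ^ 2 = 1} with hS
  have hSne : S.Nonempty := by
    refine ⟨fun j => if j = ⟨_, hj0⟩ then 1 else 0, ?_⟩
    simp only [hS, Set.mem_setOf_eq]
    rw [Finset.sum_eq_single (⟨_, hj0⟩ : ι)]
    · simp
    · intro b _ hb; simp [hb]
    · simp
  have hSclosed : IsClosed S := by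
    have : Continuous fun v : ι → ℝ => ∑ j : ι, (v j) ^ 2 :=
      continuous_finset_sum _ fun j _ => (continuous_apply j).pow 2
    exact isClosed_eq this continuous_const
  have hSsub : S ⊆ Metric.closedBall 0 1 := by
    intro v hv
    rw [Metric.mem_closedBall, dist_zero_right]
    rw [pi_norm_le_iff_of_nonneg zero_le_one]
    intro j
    have h1 : (v j) ^ 2 ≤ 1 := by
      rw [← hv]
      exact Finset.single_le_sum (fun i _ => sq_nonneg (v i)) (Finset.mem_univ j)
    rw [Real.norm_eq_abs, ← abs_one]
    exact abs_le_abs (by nlinarith [abs_nonneg (v j), le_abs_self (v j)]) (by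
      nlinarith [abs_nonneg (v j), neg_abs_le (v j)])
  have hScompact : IsCompact S :=
    (isCompact_closedBall (0 : ι → ℝ) 1).of_isClosed_subset hSclosed hSsub
  obtain ⟨v, hvS, hmin'⟩ := hScompact.exists_isMinOn hSne hFcont.continuousOn
  have hmin : ∀ w ∈ S, F v ≤ F w := fun w hw => hmin' hw
  -- the candidate
  refine ⟨fun j => if h : j ∈ A then v ⟨j, h⟩ else 0, ?_, ?_⟩
  · have : ∑ j ∈ A, (if h : j ∈ A then v ⟨j, h⟩ else 0) ^ 2 = 1 := by
      rw [← Finset.sum_attach A fun j => (if h : j ∈ A then v ⟨j, h⟩ else 0) ^ 2]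
      rw [← hvS]
      exact Finset.sum_congr (Finset.univ_eq_attach A).symm fun j _ => by
        rw [dif_pos j.2]
    rw [this, Real.sqrt_one]
  · intro b' hb' x hx
    -- b' gives a point of S
    have hb'S : (fun j : ι => b' j.1) ∈ S := by
      have h1 : (0:ℝ) ≤ ∑ j ∈ A, (b' j) ^ 2 :=
        Finset.sum_nonneg fun i _ => sq_nonneg _
      have h2 : ∑ j ∈ A, (b' j) ^ 2 = 1 := by
        have := hb'
        rwa [show (1:ℝ) = Real.sqrt 1 by rw [Real.sqrt_one],
          Real.sqrt_inj h1 zero_le_one] at this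
      simp only [hS, Set.mem_setOf_eq]
      rw [← h2, ← Finset.sum_attach A fun j => (b' j) ^ 2]
      exact Finset.sum_congr (Finset.univ_eq_attach A) fun j _ => rfl
    have hFvw := hmin _ hb'S
    -- identify RHS with F (b' ∘ val)
    have hsum : ∀ k, (∑ j : ι, d j.1 k * b' j.1) = ∑ j ∈ A, d j k * b' j := by
      intro k
      rw [← Finset.sum_attach A fun j => d j k * b' j, Finset.univ_eq_attach]
    have hRHS : F (fun j : ι => b' j.1) =
        Real.sqrt (∑ k ∈ K, (∑ j ∈ A, d j k * b' j) ^ 2) := by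
      simp only [hF, hsum]
    -- rewrite LHS using hD and swap sums
    set c : (Fin 3 → ℕ) → ℝ := fun k => ∑ j : ι, d j.1 k * v j with hc
    have hLHS : ∑ j ∈ A, (if h : j ∈ A then v ⟨j, h⟩ else 0) * tetBern m j (p x)
        = ∑ k ∈ K, c k * triBern (m * n) k x := by
      rw [← Finset.sum_attach A
        fun j => (if h : j ∈ A then v ⟨j, h⟩ else 0) * tetBern m j (p x)]
      have e1 : ∀ j : ι, (if h : j.1 ∈ A then v ⟨j.1, h⟩ else 0) * tetBern m j.1 (p x)
          = ∑ k ∈ K, d j.1 k * v j * triBern (m * n) k x := by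
        intro j
        rw [dif_pos j.2, hD j.1 j.2 x, Finset.mul_sum]
        exact Finset.sum_congr rfl fun k _ => by ring
      rw [Finset.sum_congr rfl fun (j : ι) _ => e1 j, Finset.sum_comm]
      refine Finset.sum_congr rfl fun k _ => ?_
      rw [hc, Finset.sum_mul, Finset.univ_eq_attach]
    calc |∑ j ∈ A, (if h : j ∈ A then v ⟨j, h⟩ else 0) * tetBern m j (p x)|
        = |∑ k ∈ K, c k * triBern (m * n) k x| := by rw [hLHS]
      _ ≤ Real.sqrt (∑ k ∈ K, (c k) ^ 2) := bern_bound (m * n) c hx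
      _ = F v := rfl
      _ ≤ F (fun j : ι => b' j.1) := hFvw
      _ = _ := hRHS
end

section
/- Let p : ℝ² → ℝ⁴ have polynomial components of total degree at most n, and let D = (d_{j,k}) satisfy B_j^m(p(s,t)) = Σ_{|k|=mn} d_{j,k} B_k^{mn}(s,t) for all (s,t) ∈ ℝ² and all |j| = m. Then for a coefficient vector b, the polynomial q_b(u) = Σ_{|j|=m} b_j B_j^m(u) satisfies q_b(p(s,t)) = 0 for all (s,t) ∈ Ω if and only if D b = 0, i.e. exact implicitizations correspond exactly to the kernel of D. -/
open MeasureTheory Finset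

lemma mcoef_ne_zero {L : ℕ} (n : ℕ) (i : Fin L → ℕ) : mcoef n i ≠ 0 := by
  unfold mcoef
  apply div_ne_zero
  · exact_mod_cast n.factorial_ne_zero
  · rw [Finset.prod_ne_zero_iff]
    intro l _
    exact_mod_cast (i l).factorial_ne_zero

lemma poly_zero_of_zero_on_Icc (P : Polynomial ℝ)
    (h : ∀ x ∈ Set.Icc (0:ℝ) (1/2), Polynomial.eval x P = 0) : P = 0 := by
  apply Polynomial.eq_zero_of_infinite_isRoot
  exact (Set.Icc_infinite (by norm_num : (0:ℝ) < 1/2)).mono fun x hx => h x hx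

lemma triBern_sum_zero_ext (N : ℕ) (c : (Fin 3 → ℕ) → ℝ)
    (h : ∀ x ∈ Omega, ∑ k ∈ Finset.Nat.antidiagonalTuple 3 N, c k * triBern N k x = 0) :
    ∀ x : ℝ × ℝ, ∑ k ∈ Finset.Nat.antidiagonalTuple 3 N, c k * triBern N k x = 0 := by
  have h1 : ∀ s : ℝ, ∀ t ∈ Set.Icc (0:ℝ) (1/2),
      ∑ k ∈ Finset.Nat.antidiagonalTuple 3 N, c k * triBern N k (s, t) = 0 := by
    intro s t ht
    set P : Polynomial ℝ := ∑ k ∈ Finset.Nat.antidiagonalTuple 3 N,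
      Polynomial.C (c k * mcoef N k) * (Polynomial.X ^ k 0 * Polynomial.C t ^ k 1 *
        (Polynomial.C (1 - t) - Polynomial.X) ^ k 2) with hPdef
    have key : ∀ x : ℝ, Polynomial.eval x P =
        ∑ k ∈ Finset.Nat.antidiagonalTuple 3 N, c k * triBern N k (x, t) := by
      intro x
      rw [hPdef, Polynomial.eval_finset_sum]
      refine Finset.sum_congr rfl fun k _ => ?_
      simp [triBern]
      ring
    have hP0 : P = 0 := by
      apply poly_zero_of_zero_on_Icc
      intro x hx
      rw [key]
      exact h (x, t) ⟨hx.1, ht.1, by simp; linarith [hx.2, ht.2]⟩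
    rw [← key s, hP0, Polynomial.eval_zero]
  intro x
  obtain ⟨s, t⟩ := x
  set Q : Polynomial ℝ := ∑ k ∈ Finset.Nat.antidiagonalTuple 3 N,
    Polynomial.C (c k * mcoef N k) * (Polynomial.C s ^ k 0 * Polynomial.X ^ k 1 *
      (Polynomial.C (1 - s) - Polynomial.X) ^ k 2) with hQdef
  have key : ∀ y : ℝ, Polynomial.eval y Q =
      ∑ k ∈ Finset.Nat.antidiagonalTuple 3 N, c k * triBern N k (s, y) := by
    intro y
    rw [hQdef, Polynomial.eval_finset_sum]
    refine Finset.sum_congr rfl fun k _ => ?_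
    simp [triBern]
    ring
  have hQ0 : Q = 0 := by
    apply poly_zero_of_zero_on_Icc
    intro y hy
    rw [key]
    exact h1 s y hy
  rw [← key t, hQ0, Polynomial.eval_zero]

lemma triBern_indep (N : ℕ) (c : (Fin 3 → ℕ) → ℝ)
    (h : ∀ x : ℝ × ℝ, ∑ k ∈ Finset.Nat.antidiagonalTuple 3 N, c k * triBern N k x = 0) :
    ∀ k ∈ Finset.Nat.antidiagonalTuple 3 N, c k = 0 := by
  set Q : MvPolynomial (Fin 3) ℝ := ∑ k ∈ Finset.Nat.antidiagonalTuple 3 N,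
    MvPolynomial.monomial (Finsupp.equivFunOnFinite.symm k) (c k * mcoef N k) with hQdef
  have evalQ : ∀ y : Fin 3 → ℝ, MvPolynomial.eval y Q =
      ∑ k ∈ Finset.Nat.antidiagonalTuple 3 N, c k * mcoef N k * ∏ l, y l ^ k l := by
    intro y
    rw [hQdef]
    simp only [map_sum, MvPolynomial.eval_monomial]
    refine Finset.sum_congr rfl fun k _ => ?_
    congr 1
    rw [Finsupp.prod]
    rw [Finset.prod_subset (Finset.subset_univ _)]
    · rfl
    · intro l _ hl
      have : k l = 0 := by simpa [Finsupp.equivFunOnFinite] using hl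
      simp [this]
  have hscale : ∀ (σ : ℝ) (y : Fin 3 → ℝ),
      MvPolynomial.eval (fun l => σ * y l) Q = σ ^ N * MvPolynomial.eval y Q := by
    intro σ y
    rw [evalQ, evalQ, Finset.mul_sum]
    refine Finset.sum_congr rfl fun k hk => ?_
    have hkN : ∑ l, k l = N := (Finset.Nat.mem_antidiagonalTuple).mp hk
    have : ∏ l, (σ * y l) ^ k l = σ ^ N * ∏ l, y l ^ k l := by
      rw [← hkN]
      rw [← Finset.prod_pow_eq_pow_sum]
      rw [← Finset.prod_mul_distrib]
      exact Finset.prod_congr rfl fun l _ => (mul_pow _ _ _)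
    rw [this]; ring
  have hone : ∀ y : Fin 3 → ℝ, y 0 + y 1 + y 2 = 1 → MvPolynomial.eval y Q = 0 := by
    intro y hy
    rw [evalQ]
    have := h (y 0, y 1)
    rw [← this]
    refine Finset.sum_congr rfl fun k _ => ?_
    rw [triBern]
    rw [Fin.prod_univ_three]
    have : (1 : ℝ) - y 0 - y 1 = y 2 := by linarith
    rw [mul_assoc]
    simp [this]
  have hall : ∀ y : Fin 3 → ℝ,
      MvPolynomial.eval y ((MvPolynomial.X 0 + MvPolynomial.X 1 + MvPolynomial.X 2) * Q) = 0 := by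
    intro y
    rw [map_mul]
    by_cases hσ : y 0 + y 1 + y 2 = 0
    · simp [hσ]
    · have hz : MvPolynomial.eval y Q = 0 := by
        set σ := y 0 + y 1 + y 2 with hσdef
        have : y = fun l => σ * ((σ⁻¹ * y l)) := by
          funext l; rw [← mul_assoc, mul_inv_cancel₀ hσ, one_mul]
        rw [this, hscale]
        have : MvPolynomial.eval (fun l => σ⁻¹ * y l) Q = 0 := by
          apply hone
          field_simp
          exact hσdef.symm
        rw [this, mul_zero]
      rw [hz, mul_zero]
  have hQ0 : Q = 0 := by
    have hprod : (MvPolynomial.X 0 + MvPolynomial.X 1 + MvPolynomial.X 2 : MvPolynomial (Fin 3) ℝ) * Q = 0 := by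
      apply MvPolynomial.funext
      intro y
      rw [hall y, map_zero]
    rcases mul_eq_zero.mp hprod with hX | hQ
    · exfalso
      have := congrArg (MvPolynomial.eval (fun _ => (1:ℝ))) hX
      norm_num at this
    · exact hQ
  intro k hk
  have hcoeff : MvPolynomial.coeff (Finsupp.equivFunOnFinite.symm k) Q = c k * mcoef N k := by
    rw [hQdef]
    rw [MvPolynomial.coeff_sum]
    rw [Finset.sum_eq_single k]
    · simp [MvPolynomial.coeff_monomial]
    · intro k' _ hne
      rw [MvPolynomial.coeff_monomial, if_neg]
      intro heq
      exact hne (Finsupp.equivFunOnFinite.symm.injective heq)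
    · intro hkk; exact absurd hk hkk
  rw [hQ0] at hcoeff
  simp at hcoeff
  rcases hcoeff with h0 | h0
  · exact h0
  · exact absurd h0 (mcoef_ne_zero N k)

/-- `q_b ∘ p` vanishes on `Ω` iff `b` lies in the kernel of `D`. -/
theorem exact_iff_kernel (n m : ℕ) (p : ℝ × ℝ → Fin 4 → ℝ)
    (hp : PolyComponents n p) (d : (Fin 4 → ℕ) → (Fin 3 → ℕ) → ℝ)
    (hD : ∀ j ∈ Finset.Nat.antidiagonalTuple 4 m, ∀ x : ℝ × ℝ,
      tetBern m j (p x) =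
        ∑ k ∈ Finset.Nat.antidiagonalTuple 3 (m * n), d j k * triBern (m * n) k x)
    (b : (Fin 4 → ℕ) → ℝ) :
    (∀ x ∈ Omega, ∑ j ∈ Finset.Nat.antidiagonalTuple 4 m, b j * tetBern m j (p x) = 0) ↔
      ∀ k ∈ Finset.Nat.antidiagonalTuple 3 (m * n),
        ∑ j ∈ Finset.Nat.antidiagonalTuple 4 m, d j k * b j = 0 := by
  have key : ∀ x : ℝ × ℝ,
      ∑ j ∈ Finset.Nat.antidiagonalTuple 4 m, b j * tetBern m j (p x)
        = ∑ k ∈ Finset.Nat.antidiagonalTuple 3 (m * n),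
            (∑ j ∈ Finset.Nat.antidiagonalTuple 4 m, d j k * b j) * triBern (m * n) k x := by
    intro x
    calc ∑ j ∈ Finset.Nat.antidiagonalTuple 4 m, b j * tetBern m j (p x)
        = ∑ j ∈ Finset.Nat.antidiagonalTuple 4 m,
            ∑ k ∈ Finset.Nat.antidiagonalTuple 3 (m * n),
              b j * (d j k * triBern (m * n) k x) := by
          refine Finset.sum_congr rfl fun j hj => ?_
          rw [hD j hj x, Finset.mul_sum]
      _ = ∑ k ∈ Finset.Nat.antidiagonalTuple 3 (m * n),
            ∑ j ∈ Finset.Nat.antidiagonalTuple 4 m,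
              b j * (d j k * triBern (m * n) k x) := Finset.sum_comm
      _ = _ := by
          refine Finset.sum_congr rfl fun k _ => ?_
          rw [Finset.sum_mul]
          exact Finset.sum_congr rfl fun j _ => by ring
  constructor
  · intro h
    apply triBern_indep
    apply triBern_sum_zero_ext
    intro x hx
    rw [← key x]
    exact h x hx
  · intro h x hx
    rw [key x]
    exact Finset.sum_eq_zero fun k hk => by rw [h k hk, zero_mul]
end

section
/- Let m, n be positive integers such that the number C(m+3,3) of multi-indices j : Fin 4 → ℕ with |j| = m strictly exceeds the number C(mn+2,2) of multi-indices k : Fin 3 → ℕ with |k| = mn. Then for every map p : ℝ² → ℝ⁴ whose components are polynomials of total degree at most n, there exists a nonzero coefficient vector b such that the polynomial q_b(u) = Σ_{|j|=m} b_j B_j^m(u) satisfies q_b(p(s,t)) = 0 for all (s,t) ∈ ℝ²; that is, an exact implicit representation of degree m exists. -/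
open MeasureTheory Finset

theorem sum_toFinsupp_card {k : ℕ} (f : Fin k →₀ ℕ) :
    ∑ i, f i = Multiset.card (Finsupp.toMultiset f) := by
  rw [Finsupp.card_toMultiset, Finsupp.sum_fintype _ _ (fun _ => rfl)]; rfl

noncomputable def tupleSymEquiv (k n : ℕ) :
    {x : Fin k → ℕ // ∑ i, x i = n} ≃ Sym (Fin k) n where
  toFun x := ⟨Finsupp.toMultiset (Finsupp.equivFunOnFinite.symm x.1), by
    rw [← sum_toFinsupp_card]
    simpa using x.2⟩
  invFun s := ⟨(Multiset.toFinsupp (α := Fin k) s.1 : Fin k →₀ ℕ), by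
    have := sum_toFinsupp_card (Multiset.toFinsupp (α := Fin k) s.1)
    rw [Multiset.toFinsupp_toMultiset, s.2] at this
    simp only [Multiset.toFinsupp_apply] at this ⊢
    exact this⟩
  left_inv x := by
    ext i
    simp [Finsupp.toMultiset_toFinsupp]
  right_inv s := by
    ext
    simp [Multiset.toFinsupp_toMultiset]

theorem card_antidiagonalTuple (k n : ℕ) :
    (Finset.Nat.antidiagonalTuple k n).card = (k + n - 1).choose n := by
  classical
  rw [← Fintype.card_coe]
  have e : (Finset.Nat.antidiagonalTuple k n : Finset (Fin k → ℕ)) ≃ Sym (Fin k) n :=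
    (Equiv.subtypeEquivRight (fun x => Finset.Nat.mem_antidiagonalTuple)).trans
      (tupleSymEquiv k n)
  rw [Fintype.card_congr e, Sym.card_sym_eq_choose]
  simp


/-- if `C(m+3,3) > C(mn+2,2)` then every polynomial surface of
degree at most `n` admits an exact implicit representation of degree `m`. -/
theorem exists_exact_implicitization (m n : ℕ) (hm : 0 < m) (hn : 0 < n)
    (hcard : Nat.choose (m * n + 2) 2 < Nat.choose (m + 3) 3)
    (p : ℝ × ℝ → Fin 4 → ℝ) (hp : PolyComponents n p) :
    ∃ b : (Fin 4 → ℕ) → ℝ,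
      (∃ j ∈ Finset.Nat.antidiagonalTuple 4 m, b j ≠ 0) ∧
      ∀ x : ℝ × ℝ,
        ∑ j ∈ Finset.Nat.antidiagonalTuple 4 m, b j * tetBern m j (p x) = 0 := by
  classical
  choose P hPdeg hPeval using hp
  set S4 := Finset.Nat.antidiagonalTuple 4 m with hS4
  set S3 := Finset.Nat.antidiagonalTuple 3 (m * n) with hS3
  set Q : (Fin 4 → ℕ) → MvPolynomial (Fin 2) ℝ :=
    fun j => MvPolynomial.C (mcoef m j) * ∏ l, P l ^ j l with hQ
  let T : (S4 → ℝ) →ₗ[ℝ] (S3 → ℝ) :=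
    { toFun := fun c k => MvPolynomial.coeff
        (Finsupp.equivFunOnFinite.symm ![k.1 0, k.1 1]) (∑ j : S4, c j • Q j.1)
      map_add' := by
        intro c c'
        funext k
        simp [add_smul, Finset.sum_add_distrib]
      map_smul' := by
        intro r c
        funext k
        simp only [RingHom.id_apply, Pi.smul_apply, smul_eq_mul, mul_smul, ← Finset.smul_sum]
        rw [MvPolynomial.coeff_smul]
        rfl }
  have hni : ¬ Function.Injective T := by
    intro h
    have hle := LinearMap.finrank_le_finrank_of_injective h
    rw [Module.finrank_fintype_fun_eq_card, Module.finrank_fintype_fun_eq_card,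
      Fintype.card_coe, Fintype.card_coe, hS4, hS3,
      card_antidiagonalTuple, card_antidiagonalTuple,
      show 4 + m - 1 = m + 3 by omega, show 3 + m * n - 1 = m * n + 2 by omega] at hle
    have h1 : (m + 3).choose m = (m + 3).choose 3 := by
      rw [← Nat.choose_symm (by omega : 3 ≤ m + 3), show m + 3 - 3 = m by omega]
    have h2 : (m * n + 2).choose (m * n) = (m * n + 2).choose 2 := by
      rw [← Nat.choose_symm (by omega : 2 ≤ m * n + 2), show m * n + 2 - 2 = m * n by omega]
    rw [h1, h2] at hle
    omega
  rw [Function.not_injective_iff] at hni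
  obtain ⟨c₁, c₂, hT12, hne⟩ := hni
  set c : S4 → ℝ := c₁ - c₂ with hc
  have hcne : c ≠ 0 := sub_ne_zero_of_ne hne
  have hTc : T c = 0 := by rw [map_sub, hT12, sub_self]
  set q : MvPolynomial (Fin 2) ℝ := ∑ j : S4, c j • Q j.1 with hq
  have hqdeg : q.totalDegree ≤ m * n := by
    apply MvPolynomial.totalDegree_finsetSum_le
    intro j _
    refine (MvPolynomial.totalDegree_smul_le _ _).trans ?_
    refine (MvPolynomial.totalDegree_mul _ _).trans ?_
    rw [MvPolynomial.totalDegree_C, zero_add]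
    refine (MvPolynomial.totalDegree_finset_prod _ _).trans ?_
    have hj : ∑ l, j.1 l = m := Finset.Nat.mem_antidiagonalTuple.1 j.2
    calc ∑ l, (P l ^ j.1 l).totalDegree
        ≤ ∑ l, j.1 l * n := Finset.sum_le_sum fun l _ =>
          (MvPolynomial.totalDegree_pow _ _).trans
            (Nat.mul_le_mul_left _ (hPdeg l))
      _ = (∑ l, j.1 l) * n := by rw [Finset.sum_mul]
      _ = m * n := by rw [hj]
  have hq0 : q = 0 := by
    apply MvPolynomial.ext
    intro d
    rw [MvPolynomial.coeff_zero]
    by_cases hd : d 0 + d 1 ≤ m * n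
    · set k : Fin 3 → ℕ := ![d 0, d 1, m * n - (d 0 + d 1)] with hk
      have hkS : k ∈ S3 := by
        rw [hS3, Finset.Nat.mem_antidiagonalTuple]
        simp only [hk, Fin.sum_univ_three, Matrix.cons_val_zero, Matrix.cons_val_one,
          Matrix.head_cons, Matrix.cons_val_two, Matrix.tail_cons]
        omega
      have h0 := congrFun hTc ⟨k, hkS⟩
      have hkd : (Finsupp.equivFunOnFinite.symm ![k 0, k 1]) = d := by
        ext i
        fin_cases i <;> simp [hk]
      simpa [T, hkd, hq, Finset.univ_eq_attach] using h0
    · apply MvPolynomial.coeff_eq_zero_of_totalDegree_lt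
      have hsupp : ∑ i ∈ d.support, d i = ∑ i : Fin 2, d i :=
        Finset.sum_subset (Finset.subset_univ _)
          (fun i _ hi => Finsupp.notMem_support_iff.1 hi)
      rw [hsupp, Fin.sum_univ_two]
      omega
  refine ⟨fun j => if h : j ∈ S4 then c ⟨j, h⟩ else 0, ?_, ?_⟩
  · obtain ⟨j0, hj0⟩ := Function.ne_iff.1 hcne
    exact ⟨j0.1, j0.2, by simpa [dif_pos j0.2] using hj0⟩
  · intro x
    have key : ∀ j : Fin 4 → ℕ, tetBern m j (p x) =
        MvPolynomial.eval ![x.1, x.2] (Q j) := by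
      intro j
      rw [hQ]
      simp only [tetBern, map_mul, MvPolynomial.eval_C, map_prod, map_pow]
      congr 1
      exact Finset.prod_congr rfl fun l _ => by rw [hPeval l x]
    calc ∑ j ∈ S4, (if h : j ∈ S4 then c ⟨j, h⟩ else 0) * tetBern m j (p x)
        = ∑ j ∈ S4.attach, (if h : j.1 ∈ S4 then c ⟨j.1, h⟩ else 0)
            * tetBern m j.1 (p x) := (Finset.sum_attach _ _).symm
      _ = ∑ j : S4, c j * MvPolynomial.eval ![x.1, x.2] (Q j.1) := by
          rw [Finset.univ_eq_attach]
          exact Finset.sum_congr rfl fun j _ => by rw [dif_pos j.2, key]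
      _ = MvPolynomial.eval ![x.1, x.2] q := by
          rw [hq, map_sum]
          exact Finset.sum_congr rfl fun j _ => by
            rw [MvPolynomial.smul_eval]
      _ = 0 := by rw [hq0, map_zero]
end
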